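/- For all 1 ≤ i,j ≤ n and 1 ≤ l ≤ k < n: ⟨E_{k,l}, x_{ij}⟩ = (−1)^{k−l} α^{l−k} δ_{l,i} δ_{k+1,j} and ⟨F_{k,l}, x_{ij}⟩ = δ_{k+1,i} δ_{l,j}. -/

import Mathlib

open scoped TensorProduct

noncomputable section

universe u v

/-- The number of inversions (the length) of a permutation of `Fin n`. -/
def permLength {n : ℕ} (σ : Equiv.Perm (Fin n)) : ℕ :=
  (Finset.univ.filter fun p : Fin n × Fin n => p.1 < p.2 ∧ σ p.2 < σ p.1).card

/-- The defining relations of the two-parameter quantum matrix bialgebra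
`O_{α,β}(M_n)`, for a family `x i j` of elements of a `k`-algebra `A`. -/
def QMRel {k : Type u} [Field k] {A : Type v} [Ring A] [Algebra k A]
    (n : ℕ) (α β : k) (x : Fin n → Fin n → A) : Prop :=
  (∀ i j l : Fin n, j < l → x i l * x i j = α⁻¹ • (x i j * x i l)) ∧
  (∀ i j l : Fin n, i < j → x j l * x i l = β • (x i l * x j l)) ∧
  (∀ i j l m : Fin n, i < j → l < m → x j l * x i m = (β * α) • (x i m * x j l)) ∧
  (∀ i j l m : Fin n, i < j → l < m →
    x j m * x i l - x i l * x j m = (β - α) • (x i m * x j l))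

/-- The quantum determinant `g = ∑_σ (-β)^{-ℓ(σ)} x_{σ(1),1} ⋯ x_{σ(n),n}`. -/
def qdet {k : Type u} [Field k] {A : Type v} [Ring A] [Algebra k A]
    (n : ℕ) (β : k) (x : Fin n → Fin n → A) : A :=
  ∑ σ : Equiv.Perm (Fin n),
    ((-β)⁻¹ ^ permLength σ) • ((List.finRange n).map fun i => x (σ i) i).prod

/-- The defining relations of the two-parameter quantized enveloping algebra
`U_{α,β}(gl_n)`, for families `a i, b i` (with inverses `ai i, bi i`, `1 ≤ i ≤ n`)
and `e j, f j` (`1 ≤ j < n`) of elements of a `k`-algebra `U`. -/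
structure UglRel {k : Type u} [Field k] {U : Type v} [Ring U] [Algebra k U]
    (n : ℕ) (α β : k) (a ai b bi e f : ℕ → U) : Prop where
  comm_aa : ∀ i j, a i * a j = a j * a i
  comm_ab : ∀ i j, a i * b j = b j * a i
  comm_bb : ∀ i j, b i * b j = b j * b i
  inv_a : ∀ i, 1 ≤ i → i ≤ n → a i * ai i = 1 ∧ ai i * a i = 1
  inv_b : ∀ i, 1 ≤ i → i ≤ n → b i * bi i = 1 ∧ bi i * b i = 1
  rel_ae : ∀ i j, 1 ≤ i → i ≤ n → 1 ≤ j → j < n →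
    a i * e j = (if i = j then α else if i = j + 1 then α⁻¹ else 1) • (e j * a i)
  rel_be : ∀ i j, 1 ≤ i → i ≤ n → 1 ≤ j → j < n →
    b i * e j = (if i = j then β else if i = j + 1 then β⁻¹ else 1) • (e j * b i)
  rel_af : ∀ i j, 1 ≤ i → i ≤ n → 1 ≤ j → j < n →
    a i * f j = (if i = j then α⁻¹ else if i = j + 1 then α else 1) • (f j * a i)
  rel_bf : ∀ i j, 1 ≤ i → i ≤ n → 1 ≤ j → j < n →
    b i * f j = (if i = j then β⁻¹ else if i = j + 1 then β else 1) • (f j * b i)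
  rel_ef : ∀ j l, 1 ≤ j → j < n → 1 ≤ l → l < n →
    e j * f l - f l * e j =
      if j = l then (α - β)⁻¹ • (a j * b (j + 1) - a (j + 1) * b j) else 0
  rel_ee : ∀ j l, 1 ≤ j → j < n → 1 ≤ l → l < n → j + 1 < l → e j * e l = e l * e j
  rel_ff : ∀ j l, 1 ≤ j → j < n → 1 ≤ l → l < n → j + 1 < l → f j * f l = f l * f j
  serre_e1 : ∀ j, 1 ≤ j → j + 1 < n →
    e j ^ 2 * e (j + 1) - (α + β) • (e j * e (j + 1) * e j)
      + (α * β) • (e (j + 1) * e j ^ 2) = 0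
  serre_e2 : ∀ j, 1 ≤ j → j + 1 < n →
    e j * e (j + 1) ^ 2 - (α + β) • (e (j + 1) * e j * e (j + 1))
      + (α * β) • (e (j + 1) ^ 2 * e j) = 0
  serre_f1 : ∀ j, 1 ≤ j → j + 1 < n →
    f j ^ 2 * f (j + 1) - (α⁻¹ + β⁻¹) • (f j * f (j + 1) * f j)
      + (α⁻¹ * β⁻¹) • (f (j + 1) * f j ^ 2) = 0
  serre_f2 : ∀ j, 1 ≤ j → j + 1 < n →
    f j * f (j + 1) ^ 2 - (α⁻¹ + β⁻¹) • (f (j + 1) * f j * f (j + 1))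
      + (α⁻¹ * β⁻¹) • (f (j + 1) ^ 2 * f j) = 0

/-- Auxiliary recursion for the root vectors: `EvecAux α e l d = E_{l+d, l}`. -/
def EvecAux {k : Type u} [Field k] {U : Type v} [Ring U] [Algebra k U]
    (α : k) (e : ℕ → U) (l : ℕ) : ℕ → U
  | 0 => e l
  | d + 1 => e (l + d + 1) * EvecAux α e l d - α⁻¹ • (EvecAux α e l d * e (l + d + 1))

/-- The root vector `E_{kk,l} = [e_{kk}, E_{kk-1,l}]_{α⁻¹}` (with `E_{l,l} = e_l`). -/
def Eroot {k : Type u} [Field k] {U : Type v} [Ring U] [Algebra k U]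
    (α : k) (e : ℕ → U) (kk l : ℕ) : U :=
  EvecAux α e l (kk - l)

/-- Auxiliary recursion for the root vectors: `FvecAux β f l d = F_{l+d, l}`. -/
def FvecAux {k : Type u} [Field k] {U : Type v} [Ring U] [Algebra k U]
    (β : k) (f : ℕ → U) (l : ℕ) : ℕ → U
  | 0 => f l
  | d + 1 => f (l + d + 1) * FvecAux β f l d - β⁻¹ • (FvecAux β f l d * f (l + d + 1))

/-- The root vector `F_{kk,l} = [f_{kk}, F_{kk-1,l}]_{β⁻¹}` (with `F_{l,l} = f_l`). -/
def Froot {k : Type u} [Field k] {U : Type v} [Ring U] [Algebra k U]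
    (β : k) (f : ℕ → U) (kk l : ℕ) : U :=
  FvecAux β f l (kk - l)

/-- The comultiplication and counit of `U_{α,β}(gl_n)` on the generators:
`a_i, b_i` (and their inverses) are group-like, `e_j` is `(w_j,1)`-primitive and
`f_j` is `(1,w_j')`-primitive, where `w_j = a_j b_{j+1}` and `w_j' = a_{j+1} b_j`. -/
structure UglComul (k : Type u) [Field k] {U : Type v} [Ring U] [Bialgebra k U]
    (n : ℕ) (a ai b bi e f : ℕ → U) : Prop where
  com_a : ∀ i, 1 ≤ i → i ≤ n → Coalgebra.comul (R := k) (a i) = a i ⊗ₜ[k] a i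
  com_ai : ∀ i, 1 ≤ i → i ≤ n → Coalgebra.comul (R := k) (ai i) = ai i ⊗ₜ[k] ai i
  com_b : ∀ i, 1 ≤ i → i ≤ n → Coalgebra.comul (R := k) (b i) = b i ⊗ₜ[k] b i
  com_bi : ∀ i, 1 ≤ i → i ≤ n → Coalgebra.comul (R := k) (bi i) = bi i ⊗ₜ[k] bi i
  cou_a : ∀ i, 1 ≤ i → i ≤ n → Coalgebra.counit (R := k) (a i) = (1 : k)
  cou_ai : ∀ i, 1 ≤ i → i ≤ n → Coalgebra.counit (R := k) (ai i) = (1 : k)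
  cou_b : ∀ i, 1 ≤ i → i ≤ n → Coalgebra.counit (R := k) (b i) = (1 : k)
  cou_bi : ∀ i, 1 ≤ i → i ≤ n → Coalgebra.counit (R := k) (bi i) = (1 : k)
  com_e : ∀ j, 1 ≤ j → j < n →
    Coalgebra.comul (R := k) (e j) = e j ⊗ₜ[k] 1 + (a j * b (j + 1)) ⊗ₜ[k] e j
  com_f : ∀ j, 1 ≤ j → j < n →
    Coalgebra.comul (R := k) (f j) = 1 ⊗ₜ[k] f j + f j ⊗ₜ[k] (a (j + 1) * b j)
  cou_e : ∀ j, 1 ≤ j → j < n → Coalgebra.counit (R := k) (e j) = 0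
  cou_f : ∀ j, 1 ≤ j → j < n → Coalgebra.counit (R := k) (f j) = 0

/-- A Hopf pairing `⟨-,-⟩ : U × O → k` between two bialgebras, in elementwise form:
`⟨uv, x⟩ = ∑ ⟨u, x₍₁₎⟩⟨v, x₍₂₎⟩`, `⟨u, xy⟩ = ∑ ⟨u₍₁₎, x⟩⟨u₍₂₎, y⟩`, `⟨1, x⟩ = ε(x)`,
`⟨u, 1⟩ = ε(u)`. -/
structure IsHopfPairing {k : Type u} [Field k] {U O : Type v}
    [Ring U] [Bialgebra k U] [Ring O] [Bialgebra k O]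
    (pair : U →ₗ[k] O →ₗ[k] k) : Prop where
  pair_mul_left : ∀ (u v : U) (z : O) (m : ℕ) (y y' : Fin m → O),
    Coalgebra.comul (R := k) z = ∑ s, y s ⊗ₜ[k] y' s →
    pair (u * v) z = ∑ s, pair u (y s) * pair v (y' s)
  pair_mul_right : ∀ (u : U) (z w : O) (m : ℕ) (p q : Fin m → U),
    Coalgebra.comul (R := k) u = ∑ s, p s ⊗ₜ[k] q s →
    pair u (z * w) = ∑ s, pair (p s) z * pair (q s) w
  pair_one_left : ∀ z : O, pair 1 z = Coalgebra.counit (R := k) z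
  pair_one_right : ∀ u : U, pair u 1 = Coalgebra.counit (R := k) u

/-- The values of the Hopf pairing between `U_{α,β}(gl_n)` and `O_{α,β}(GL_n)`
on the generators. -/
structure PairVals {k : Type u} [Field k] {U O : Type v}
    [Ring U] [Algebra k U] [Ring O] [Algebra k O]
    (n : ℕ) (α β : k) (a ai b bi e f : ℕ → U) (x : ℕ → ℕ → O)
    (pair : U →ₗ[k] O →ₗ[k] k) : Prop where
  val_a : ∀ i s t, 1 ≤ i → i ≤ n → 1 ≤ s → s ≤ n → 1 ≤ t → t ≤ n →
    pair (a i) (x s t) = if s = t then (if i = s then α else 1) else 0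
  val_ai : ∀ i s t, 1 ≤ i → i ≤ n → 1 ≤ s → s ≤ n → 1 ≤ t → t ≤ n →
    pair (ai i) (x s t) = if s = t then (if i = s then α⁻¹ else 1) else 0
  val_b : ∀ i s t, 1 ≤ i → i ≤ n → 1 ≤ s → s ≤ n → 1 ≤ t → t ≤ n →
    pair (b i) (x s t) = if s = t then (if i = s then β else 1) else 0
  val_bi : ∀ i s t, 1 ≤ i → i ≤ n → 1 ≤ s → s ≤ n → 1 ≤ t → t ≤ n →
    pair (bi i) (x s t) = if s = t then (if i = s then β⁻¹ else 1) else 0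
  val_e : ∀ j s t, 1 ≤ j → j < n → 1 ≤ s → s ≤ n → 1 ≤ t → t ≤ n →
    pair (e j) (x s t) = if j = s ∧ t = j + 1 then 1 else 0
  val_f : ∀ j s t, 1 ≤ j → j < n → 1 ≤ s → s ≤ n → 1 ≤ t → t ≤ n →
    pair (f j) (x s t) = if s = j + 1 ∧ t = j then 1 else 0

/-- The defining relations of `O_{α,β}(M_n)` for a family `x i j` (`1 ≤ i,j ≤ n`)
indexed by natural numbers. -/
def QMRelN {k : Type u} [Field k] {O : Type v} [Ring O] [Algebra k O]
    (n : ℕ) (α β : k) (x : ℕ → ℕ → O) : Prop :=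
  (∀ i j l, 1 ≤ i → i ≤ n → 1 ≤ j → 1 ≤ l → l ≤ n → j < l →
    x i l * x i j = α⁻¹ • (x i j * x i l)) ∧
  (∀ i j l, 1 ≤ i → 1 ≤ j → j ≤ n → 1 ≤ l → l ≤ n → i < j →
    x j l * x i l = β • (x i l * x j l)) ∧
  (∀ i j l m, 1 ≤ i → 1 ≤ j → j ≤ n → 1 ≤ l → 1 ≤ m → m ≤ n → i < j → l < m →
    x j l * x i m = (β * α) • (x i m * x j l)) ∧
  (∀ i j l m, 1 ≤ i → 1 ≤ j → j ≤ n → 1 ≤ l → 1 ≤ m → m ≤ n → i < j → l < m →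
    x j m * x i l - x i l * x j m = (β - α) • (x i m * x j l))

/-- The comultiplication and counit of `O_{α,β}(M_n)` on the generators,
for a family indexed by natural numbers. -/
def OComulN (k : Type u) [Field k] {O : Type v} [Ring O] [Bialgebra k O]
    (n : ℕ) (x : ℕ → ℕ → O) : Prop :=
  (∀ i j, 1 ≤ i → i ≤ n → 1 ≤ j → j ≤ n →
    Coalgebra.comul (R := k) (x i j) = ∑ s ∈ Finset.Icc 1 n, x i s ⊗ₜ[k] x s j) ∧
  (∀ i j, 1 ≤ i → i ≤ n → 1 ≤ j → j ≤ n →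
    Coalgebra.counit (R := k) (x i j) = if i = j then (1 : k) else 0)

/-- the values of the Hopf pairing on the root vectors:
`⟨E_{kk,l}, x_{ij}⟩ = (-1)^{kk-l} α^{l-kk} δ_{l,i} δ_{kk+1,j}` and
`⟨F_{kk,l}, x_{ij}⟩ = δ_{kk+1,i} δ_{l,j}`. -/
theorem pairing_root_vectors
    {k : Type u} [Field k] [IsAlgClosed k] [CharZero k]
    {U O : Type v} [Ring U] [Bialgebra k U] [Ring O] [Bialgebra k O]
    (n : ℕ) (hn : 0 < n) (α β : k) (hα : α ≠ 0) (hβ : β ≠ 0) (hαβ : α ≠ β)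
    (a ai b bi e f : ℕ → U) (x : ℕ → ℕ → O)
    (hUrel : UglRel n α β a ai b bi e f) (hUcom : UglComul k n a ai b bi e f)
    (hOrel : QMRelN n α β x) (hOcom : OComulN k n x)
    (pair : U →ₗ[k] O →ₗ[k] k)
    (hpair : IsHopfPairing pair)
    (hvals : PairVals n α β a ai b bi e f x pair) :
    ∀ i j l kk, 1 ≤ i → i ≤ n → 1 ≤ j → j ≤ n → 1 ≤ l → l ≤ kk → kk < n →
      pair (Eroot α e kk l) (x i j) =
        (if l = i ∧ kk + 1 = j then (-1 : k) ^ (kk - l) * α⁻¹ ^ (kk - l) else 0) ∧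
      pair (Froot β f kk l) (x i j) = (if kk + 1 = i ∧ l = j then 1 else 0) := by
  -- helper: pairing with a product, via the comultiplication of x i j
  have pmul : ∀ (u v : U) (i j : ℕ), 1 ≤ i → i ≤ n → 1 ≤ j → j ≤ n →
      pair (u * v) (x i j) =
        ∑ s : Fin n, pair u (x i (1 + s.val)) * pair v (x (1 + s.val) j) := by
    intro u v i j hi1 hin hj1 hjn
    have hcom := hOcom.1 i j hi1 hin hj1 hjn
    have hfin : Coalgebra.comul (R := k) (x i j) =
        ∑ s : Fin n, x i (1 + s.val) ⊗ₜ[k] x (1 + s.val) j := by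
      rw [hcom, ← Finset.Ico_add_one_right_eq_Icc, Finset.sum_Ico_eq_sum_range]
      simp only [Nat.add_sub_cancel]
      rw [← Fin.sum_univ_eq_sum_range (fun s => x i (1 + s) ⊗ₜ[k] x (1 + s) j) n]
    exact hpair.pair_mul_left u v _ n _ _ hfin
  have key : ∀ d l, 1 ≤ l → l + d < n → ∀ i j, 1 ≤ i → i ≤ n → 1 ≤ j → j ≤ n →
      pair (EvecAux α e l d) (x i j) =
        (if l = i ∧ l + d + 1 = j then (-1 : k) ^ d * α⁻¹ ^ d else 0) ∧
      pair (FvecAux β f l d) (x i j) =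
        (if l + d + 1 = i ∧ l = j then 1 else 0) := by
    intro d
    induction d with
    | zero =>
      intro l hl1 hln i j hi1 hin hj1 hjn
      constructor
      · show pair (e l) (x i j) = _
        rw [hvals.val_e l i j hl1 (by omega) hi1 hin hj1 hjn]
        have : (l = i ∧ j = l + 1) ↔ (l = i ∧ l + 0 + 1 = j) := by omega
        rw [if_congr this rfl rfl]
        split_ifs <;> norm_num
      · show pair (f l) (x i j) = _
        rw [hvals.val_f l i j hl1 (by omega) hi1 hin hj1 hjn]
        have : (i = l + 1 ∧ j = l) ↔ (l + 0 + 1 = i ∧ l = j) := by omega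
        rw [if_congr this rfl rfl]
    | succ d ih =>
      intro l hl1 hln i j hi1 hin hj1 hjn
      have hld : l + d < n := by omega
      have hm : l + d + 1 < n := by omega
      have hm1 : 1 ≤ l + d + 1 := by omega
      have hs0 : l + d < n := hld
      constructor
      · show pair (e (l + d + 1) * EvecAux α e l d
            - α⁻¹ • (EvecAux α e l d * e (l + d + 1))) (x i j) = _
        rw [map_sub, map_smul, LinearMap.sub_apply, LinearMap.smul_apply,
          smul_eq_mul]
        have h1 : pair (e (l + d + 1) * EvecAux α e l d) (x i j) = 0 := by
          rw [pmul _ _ i j hi1 hin hj1 hjn]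
          refine Finset.sum_eq_zero fun s _ => ?_
          have hs : 1 + (s : ℕ) ≤ n := by have := s.isLt; omega
          rw [hvals.val_e (l + d + 1) i (1 + s) hm1 hm hi1 hin (by omega) hs,
            (ih l hl1 hld (1 + s) j (by omega) hs hj1 hjn).1]
          split_ifs with h1 h2 <;> first | omega | ring
        have h2 : pair (EvecAux α e l d * e (l + d + 1)) (x i j) =
            (if l = i ∧ l + (d + 1) + 1 = j then (-1 : k) ^ d * α⁻¹ ^ d else 0) := by
          rw [pmul _ _ i j hi1 hin hj1 hjn]
          rw [Finset.sum_eq_single (⟨l + d, hs0⟩ : Fin n)]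
          · have hs : (1 : ℕ) + (l + d) = l + d + 1 := by omega
            rw [(ih l hl1 hld i (1 + (l + d)) hi1 (by omega) (by omega) (by omega)).1,
              hvals.val_e (l + d + 1) (1 + (l + d)) j hm1 hm (by omega) (by omega) hj1 hjn]
            split_ifs with ha hb hc <;> first | omega | ring
          · intro s _ hsne
            have hs : 1 + (s : ℕ) ≤ n := by have := s.isLt; omega
            have hsv : 1 + (s : ℕ) ≠ l + d + 1 := by
              intro h; apply hsne; ext; simp; omega
            rw [(ih l hl1 hld i (1 + s) hi1 hin (by omega) hs).1,
              hvals.val_e (l + d + 1) (1 + s) j hm1 hm (by omega) hs hj1 hjn]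
            split_ifs with h1 h2 <;> first | omega | ring
          · intro h; exact absurd (Finset.mem_univ _) h
        rw [h1, h2]
        split_ifs <;> ring
      · show pair (f (l + d + 1) * FvecAux β f l d
            - β⁻¹ • (FvecAux β f l d * f (l + d + 1))) (x i j) = _
        rw [map_sub, map_smul, LinearMap.sub_apply, LinearMap.smul_apply,
          smul_eq_mul]
        have h1 : pair (f (l + d + 1) * FvecAux β f l d) (x i j) =
            (if l + (d + 1) + 1 = i ∧ l = j then 1 else 0) := by
          rw [pmul _ _ i j hi1 hin hj1 hjn]
          rw [Finset.sum_eq_single (⟨l + d, hs0⟩ : Fin n)]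
          · rw [hvals.val_f (l + d + 1) i (1 + (l + d)) hm1 hm hi1 hin (by omega) (by omega),
              (ih l hl1 hld (1 + (l + d)) j (by omega) (by omega) hj1 hjn).2]
            split_ifs with ha hb hc <;> first | omega | ring
          · intro s _ hsne
            have hs : 1 + (s : ℕ) ≤ n := by have := s.isLt; omega
            have hsv : 1 + (s : ℕ) ≠ l + d + 1 := by
              intro h; apply hsne; ext; simp; omega
            rw [hvals.val_f (l + d + 1) i (1 + s) hm1 hm hi1 hin (by omega) hs,
              (ih l hl1 hld (1 + s) j (by omega) hs hj1 hjn).2]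
            split_ifs with h1 h2 <;> first | omega | ring
          · intro h; exact absurd (Finset.mem_univ _) h
        have h2 : pair (FvecAux β f l d * f (l + d + 1)) (x i j) = 0 := by
          rw [pmul _ _ i j hi1 hin hj1 hjn]
          refine Finset.sum_eq_zero fun s _ => ?_
          have hs : 1 + (s : ℕ) ≤ n := by have := s.isLt; omega
          rw [(ih l hl1 hld i (1 + s) hi1 hin (by omega) hs).2,
            hvals.val_f (l + d + 1) (1 + s) j hm1 hm (by omega) hs hj1 hjn]
          split_ifs with h1 h2 <;> first | omega | ring
        rw [h1, h2]
        ring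
  intro i j l kk hi1 hin hj1 hjn hl1 hlk hkn
  obtain ⟨d, rfl⟩ : ∃ d, kk = l + d := ⟨kk - l, by omega⟩
  have hd : l + d - l = d := by omega
  have := key d l hl1 hkn i j hi1 hin hj1 hjn
  unfold Eroot Froot
  rw [hd]
  exact this
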